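/- For every Boolean function f on n variables, the AND-query complexity is at most the 0-query complexity times log(n+1): D^∧(f) ≤ D⁰(f)·log₂(n+1). -/

import Mathlib

section Defs
variable {I : Type*} [Fintype I] [DecidableEq I]

/-- Flip a single bit of the input. -/
def flipOne (i : I) (x : I → Bool) : I → Bool := Function.update x i (!x i)

/-- Flip all bits in the block `B`. -/
def flipSet (B : Finset I) (x : I → Bool) : I → Bool := fun j => if j ∈ B then !x j else x j

/-- Sensitivity of `f` at `x`: the number of coordinates whose flip changes the value. -/
def sensAt (f : (I → Bool) → Bool) (x : I → Bool) : ℕ :=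
  (Finset.univ.filter fun i => f (flipOne i x) ≠ f x).card

/-- Sensitivity of `f`. -/
noncomputable def sensF (f : (I → Bool) → Bool) : ℕ := sSup (Set.range (sensAt f))

/-- There exist `m` pairwise disjoint sensitive blocks for `f` at `x`. -/
def SensBlocks (f : (I → Bool) → Bool) (x : I → Bool) (m : ℕ) : Prop :=
  ∃ B : Fin m → Finset I, (∀ a b, a ≠ b → Disjoint (B a) (B b)) ∧
    ∀ a, f (flipSet (B a) x) ≠ f x

/-- Block sensitivity of `f`. -/
noncomputable def bsF (f : (I → Bool) → Bool) : ℕ := sSup {m | ∃ x, SensBlocks f x m}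

/-- `S` is a certificate for `f` at `x`. -/
def IsCert (f : (I → Bool) → Bool) (x : I → Bool) (S : Finset I) : Prop :=
  ∀ y, (∀ i ∈ S, y i = x i) → f y = f x

/-- Certificate complexity of `f` at `x`. -/
noncomputable def certAt (f : (I → Bool) → Bool) (x : I → Bool) : ℕ :=
  sInf {m | ∃ S : Finset I, IsCert f x S ∧ S.card = m}

/-- Certificate complexity of `f`. -/
noncomputable def certF (f : (I → Bool) → Bool) : ℕ := sSup (Set.range (certAt f))

/-- Restrict `f` by the partial assignment `ρ`; the result is a function on the
free variables (those with `ρ i = none`). -/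
def restrictTo (ρ : I → Option Bool) (f : (I → Bool) → Bool) :
    ({i : I // ρ i = none} → Bool) → Bool :=
  fun y => f fun i => if h : ρ i = none then y ⟨i, h⟩ else (ρ i).getD false

end Defs

/-- The base Rubinstein-type function on `k²` variables: value `1` iff exactly one aligned
contiguous block of `k` variables is all-`1` and all other variables are `0`. -/
def rub (k : ℕ) (x : Fin (k ^ 2) → Bool) : Bool :=
  decide (∃ j : Fin k, ∀ i : Fin (k ^ 2),
    (x i = true ↔ (j.val * k ≤ i.val ∧ i.val < j.val * k + k)))

/-- The OR of `k²` disjoint copies of the base Rubinstein-type function. -/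
def bigRub (k : ℕ) (x : Fin (k ^ 2) × Fin (k ^ 2) → Bool) : Bool :=
  decide (∃ c : Fin (k ^ 2), rub k (fun t => x (c, t)) = true)

/-- Deterministic single-bit decision trees. -/
inductive DTree (I : Type*) : Type _
  | leaf : Bool → DTree I
  | node : I → DTree I → DTree I → DTree I

namespace DTree
variable {I : Type*}

def eval : DTree I → (I → Bool) → Bool
  | leaf b, _ => b
  | node i t0 t1, x => bif x i then t1.eval x else t0.eval x

def depth : DTree I → ℕ
  | leaf _ => 0
  | node _ t0 t1 => max t0.depth t1.depth + 1

/-- Maximum number of queries answered `0` on a root-to-leaf path. -/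
def zeroDepth : DTree I → ℕ
  | leaf _ => 0
  | node _ t0 t1 => max (t0.zeroDepth + 1) t1.zeroDepth

end DTree

/-- AND-decision trees: each node queries the conjunction of a subset of variables. -/
inductive ADTree (I : Type*) : Type _
  | leaf : Bool → ADTree I
  | node : Finset I → ADTree I → ADTree I → ADTree I

namespace ADTree
variable {I : Type*}

def eval : ADTree I → (I → Bool) → Bool
  | leaf b, _ => b
  | node S t0 t1, x => if ∀ i ∈ S, x i = true then t1.eval x else t0.eval x

def depth : ADTree I → ℕ
  | leaf _ => 0
  | node _ t0 t1 => max t0.depth t1.depth + 1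

end ADTree

/-- The 0-query complexity: smallest 0-depth of a decision tree computing `f`. -/
noncomputable def zeroQuery {I : Type*} (f : (I → Bool) → Bool) : ℕ :=
  sInf {d | ∃ T : DTree I, (∀ x, T.eval x = f x) ∧ T.zeroDepth = d}

/-- The AND-query complexity: smallest depth of an AND-decision tree computing `f`. -/
noncomputable def andQuery {I : Type*} (f : (I → Bool) → Bool) : ℕ :=
  sInf {d | ∃ T : ADTree I, (∀ x, T.eval x = f x) ∧ T.depth = d}

/-- `TRIBES_n`: the AND of `n` disjoint ORs of `n` variables each. -/
def tribes (n : ℕ) (x : Fin n × Fin n → Bool) : Bool :=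
  decide (∀ i : Fin n, ∃ j : Fin n, x (i, j) = true)

-- AUX

section Aux

lemma opt_some_or {α : Type*} (a : α) (b : Option α) : (Option.some a).or b = some a := rfl

variable {I : Type*} [DecidableEq I]

/-- The trees hanging off the all-ones path, with the variable queried at each node. -/
def onesList : DTree I → List (I × DTree I)
  | .leaf _ => []
  | .node i t0 t1 => (i, t0) :: onesList t1

/-- The leaf at the end of the all-ones path. -/
def onesLeaf : DTree I → Bool
  | .leaf b => b
  | .node _ _ t1 => onesLeaf t1

lemma onesList_zeroDepth {T : DTree I} : ∀ p ∈ onesList T, p.2.zeroDepth < T.zeroDepth := by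
  induction T with
  | leaf b => intro p hp; simp [onesList] at hp
  | node i t0 t1 ih0 ih1 =>
    intro p hp
    rcases List.mem_cons.1 hp with h | h
    · subst h; simp only [DTree.zeroDepth]; omega
    · have := ih1 p h
      simp only [DTree.zeroDepth]; omega

lemma eval_onesList (T : DTree I) (x : I → Bool) :
    T.eval x = (match (onesList T).find? (fun p => !x p.1) with
      | some q => q.2.eval x
      | none => onesLeaf T) := by
  induction T with
  | leaf b => simp [onesList, onesLeaf, DTree.eval]
  | node i t0 t1 ih0 ih1 =>
    by_cases h : x i
    · rw [show (onesList (.node i t0 t1)).find? (fun p => !x p.1)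
          = (onesList t1).find? (fun p => !x p.1) from ?_]
      · simp [DTree.eval, h, onesLeaf]; exact ih1
      · exact List.find?_cons_of_neg (by simp [h])
    · simp only [Bool.not_eq_true] at h
      rw [show (onesList (.node i t0 t1)).find? (fun p => !x p.1)
          = some (i, t0) from List.find?_cons_of_pos (by simp [h])]
      simp [DTree.eval, h]

/-- Keep only the first occurrence of each key, dropping keys already seen. -/
def filterSeen {α : Type*} : Finset I → List (I × α) → List (I × α)
  | _, [] => []
  | seen, (i, t) :: L =>
    if i ∈ seen then filterSeen seen L else (i, t) :: filterSeen (insert i seen) L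

lemma mem_filterSeen {α : Type*} : ∀ (seen : Finset I) (L : List (I × α)) p,
    p ∈ filterSeen seen L → p ∈ L := by
  intro seen L
  induction L generalizing seen with
  | nil => intro p hp; simp [filterSeen] at hp
  | cons q L ih =>
    intro p hp
    obtain ⟨i, t⟩ := q
    rw [filterSeen] at hp
    split at hp
    · exact List.mem_cons_of_mem _ (ih _ _ hp)
    · rcases List.mem_cons.1 hp with h | h
      · exact h ▸ List.mem_cons_self
      · exact List.mem_cons_of_mem _ (ih _ _ h)

lemma length_filterSeen {α : Type*} [Fintype I] :
    ∀ (seen : Finset I) (L : List (I × α)), (filterSeen seen L).length ≤ seenᶜ.card := by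
  intro seen L
  induction L generalizing seen with
  | nil => simp [filterSeen]
  | cons q L ih =>
    obtain ⟨i, t⟩ := q
    rw [filterSeen]
    split
    · exact ih seen
    · rename_i hi
      have h1 := ih (insert i seen)
      have h2 : (insert i seen)ᶜ.card + 1 = seenᶜ.card := by
        rw [Finset.compl_insert]
        rw [Finset.card_erase_add_one (by simpa using hi)]
      simp only [List.length_cons]
      omega

lemma find?_filterSeen {α : Type*} (x : I → Bool) :
    ∀ (seen : Finset I) (L : List (I × α)), (∀ i ∈ seen, x i = true) →
    (filterSeen seen L).find? (fun p => !x p.1) = L.find? (fun p => !x p.1) := by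
  intro seen L
  induction L generalizing seen with
  | nil => intro _; simp [filterSeen]
  | cons q L ih =>
    intro hseen
    obtain ⟨i, t⟩ := q
    rw [filterSeen]
    split
    · rename_i hi
      rw [ih seen hseen, List.find?_cons_of_neg (by simp [hseen i hi])]
    · rename_i hi
      by_cases hx : x i
      · rw [List.find?_cons_of_neg (by simp [hx]),
          List.find?_cons_of_neg (by simp [hx])]
        refine ih _ ?_
        intro j hj
        rcases Finset.mem_insert.1 hj with h | h
        · exact h ▸ hx
        · exact hseen j h
      · rw [List.find?_cons_of_pos (by simp [hx]),
          List.find?_cons_of_pos (by simp [hx])]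

/-- Binary search over the trees in `L` for the first index whose key evaluates to
`false`, assuming all keys in `pre` are `true`. -/
def searchAux : ℕ → Finset I → List (I × ADTree I) → ADTree I → ADTree I
  | 0, _, _, dflt => dflt
  | _ + 1, _, [], dflt => dflt
  | k + 1, pre, q :: L', dflt =>
    let L := q :: L'
    let h' := L'.length / 2
    let piv := L.getD h' q
    let S := pre ∪ ((L.take (h' + 1)).map Prod.fst).toFinset
    ADTree.node S
      (searchAux k pre (L.take h') piv.2)
      (searchAux k S (L.drop (h' + 1)) dflt)

lemma searchAux_depth : ∀ (k : ℕ) (pre : Finset I) (L : List (I × ADTree I))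
    (dflt : ADTree I) (D : ℕ), dflt.depth ≤ D → (∀ p ∈ L, (p.2 : ADTree I).depth ≤ D) →
    (searchAux k pre L dflt).depth ≤ k + D := by
  intro k
  induction k with
  | zero => intro pre L dflt D h1 h2; simpa [searchAux] using h1
  | succ k ih =>
    intro pre L dflt D h1 h2
    match L with
    | [] => rw [searchAux]; omega
    | q :: L' =>
      rw [searchAux]
      simp only [ADTree.depth]
      have hlt : L'.length / 2 < (q :: L').length := by simp; omega
      have hpiv : (q :: L').getD (L'.length / 2) q ∈ q :: L' := by
        rw [List.getD_eq_getElem?_getD, List.getElem?_eq_getElem hlt]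
        simpa using List.getElem_mem hlt
      have d0 := ih pre ((q :: L').take (L'.length / 2)) _ D (h2 _ hpiv)
        (fun p hp => h2 p (List.mem_of_mem_take hp))
      have d1 := ih (pre ∪ (((q :: L').take (L'.length / 2 + 1)).map Prod.fst).toFinset)
        ((q :: L').drop (L'.length / 2 + 1)) dflt D h1
        (fun p hp => h2 p (List.mem_of_mem_drop hp))
      omega

lemma searchAux_eval : ∀ (k : ℕ) (pre : Finset I) (L : List (I × ADTree I))
    (dflt : ADTree I) (x : I → Bool), L.length + 1 ≤ 2 ^ k → (∀ i ∈ pre, x i = true) →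
    (searchAux k pre L dflt).eval x =
      (match L.find? (fun p => !x p.1) with
        | some q => q.2.eval x
        | none => dflt.eval x) := by
  intro k
  induction k with
  | zero =>
    intro pre L dflt x hlen hpre
    have : L = [] := by
      cases L with
      | nil => rfl
      | cons a l => simp at hlen
    subst this
    simp [searchAux]
  | succ k ih =>
    intro pre L dflt x hlen hpre
    match L with
    | [] => simp [searchAux]
    | q :: L' =>
      set m := L'.length + 1 with hm
      have hL : (q :: L').length = m := by simp [hm]
      set h' := L'.length / 2 with hh'
      have hpow : 0 < 2 ^ k := Nat.pow_pos (by norm_num)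
      have hlen' : m + 1 ≤ 2 * 2 ^ k := by
        rw [pow_succ] at hlen
        omega
      have hh'lt : h' < m := by omega
      -- the pivot
      have hh'lt2 : h' < (q :: L').length := by simp only [List.length_cons]; omega
      set piv := (q :: L').getD h' q with hpivdef
      have hget : (q :: L')[h']? = some piv := by
        rw [List.getElem?_eq_getElem hh'lt2, hpivdef, List.getD_eq_getElem?_getD,
          List.getElem?_eq_getElem hh'lt2]
        rfl
      have htake : (q :: L').take (h' + 1) = (q :: L').take h' ++ [piv] := by
        rw [List.take_succ, hget]
        rfl
      rw [searchAux]
      simp only [ADTree.eval]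
      by_cases hall : ∀ i ∈ pre ∪ (((q :: L').take (h' + 1)).map Prod.fst).toFinset, x i = true
      · rw [if_pos hall]
        rw [ih _ ((q :: L').drop (h' + 1)) dflt x
          (by simp only [List.length_drop, List.length_cons]; omega) hall]
        have hfr : ((q :: L').take (h' + 1)).find? (fun p => !x p.1) = none := by
          rw [List.find?_eq_none]
          intro p hp
          have : x p.1 = true := hall p.1 (Finset.mem_union_right _ (by
            simp only [List.mem_toFinset, List.mem_map]; exact ⟨p, hp, rfl⟩))
          simp [this]
        conv_rhs => rw [← List.take_append_drop (h' + 1) (q :: L'), List.find?_append, hfr]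
        rfl
      · rw [if_neg hall]
        rw [ih pre ((q :: L').take h') piv.2 x
          (by simp only [List.length_take, List.length_cons]; omega) hpre]
        -- there is a false key among the first h'+1 entries
        have hex : ∃ p ∈ (q :: L').take (h' + 1), x p.1 = false := by
          push_neg at hall
          obtain ⟨i, hi, hxi⟩ := hall
          rcases Finset.mem_union.1 hi with h | h
          · exact absurd (hpre i h) hxi
          · simp only [List.mem_toFinset, List.mem_map] at h
            obtain ⟨p, hp, rfl⟩ := h
            exact ⟨p, hp, by simpa using hxi⟩
        have hfr : ∃ r, ((q :: L').take (h' + 1)).find? (fun p => !x p.1) = some r := by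
          obtain ⟨p, hp, hxp⟩ := hex
          cases hr : ((q :: L').take (h' + 1)).find? (fun p => !x p.1) with
          | none =>
            have := List.find?_eq_none.1 hr p hp
            rw [hxp] at this
            simp at this
          | some r => exact ⟨r, rfl⟩
        obtain ⟨r, hr⟩ := hfr
        conv_rhs => rw [← List.take_append_drop (h' + 1) (q :: L'), List.find?_append, hr,
          opt_some_or]
        rw [htake, List.find?_append] at hr
        rcases hfr2 : ((q :: L').take h').find? (fun p => !x p.1) with _ | r2
        · rw [hfr2, Option.none_or] at hr
          have h2 := List.mem_of_find?_eq_some hr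
          simp only [List.mem_singleton] at h2
          rw [hfr2, h2]
        · rw [hfr2, opt_some_or] at hr
          cases hr
          rw [hfr2]

lemma main_sim {I : Type*} [Fintype I] [DecidableEq I] (c : ℕ)
    (hc : Fintype.card I + 1 ≤ 2 ^ c) :
    ∀ (d : ℕ) (T : DTree I), T.zeroDepth ≤ d →
      ∃ A : ADTree I, (∀ x, A.eval x = T.eval x) ∧ A.depth ≤ d * c := by
  intro d
  induction d with
  | zero =>
    intro T hT
    match T with
    | .leaf b => exact ⟨.leaf b, fun x => rfl, by simp [ADTree.depth]⟩
    | .node i t0 t1 => simp only [DTree.zeroDepth] at hT; omega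
  | succ d ih =>
    intro T hT
    classical
    set F : I × DTree I → I × ADTree I :=
      fun p => (p.1, if h : p.2.zeroDepth ≤ d then (ih p.2 h).choose else .leaf false)
      with hF
    set L0 := onesList T with hL0
    set L := filterSeen (∅ : Finset I) L0 with hLdef
    set LA := L.map F with hLA
    have hzd : ∀ p ∈ L, p.2.zeroDepth ≤ d := by
      intro p hp
      have := onesList_zeroDepth p (mem_filterSeen _ _ p hp)
      omega
    refine ⟨searchAux c ∅ LA (.leaf (onesLeaf T)), ?_, ?_⟩
    · intro x
      have hlen : LA.length + 1 ≤ 2 ^ c := by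
        have h1 : L.length ≤ (∅ᶜ : Finset I).card := length_filterSeen ∅ L0
        simp only [Finset.compl_empty, Finset.card_univ] at h1
        simp only [hLA, List.length_map]
        omega
      rw [searchAux_eval c ∅ LA _ x hlen (by simp)]
      have hmap : LA.find? (fun p => !x p.1) = (L.find? (fun p => !x p.1)).map F :=
        List.find?_map ..
      have hfl : L.find? (fun p => !x p.1) = L0.find? (fun p => !x p.1) :=
        find?_filterSeen x ∅ L0 (by simp)
      rw [eval_onesList T x]
      cases hfind : L0.find? (fun p => !x p.1) with
      | none =>
        have : L.find? (fun p => !x p.1) = none := by rw [hfl, hfind]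
        rw [hmap, this]
        rfl
      | some p =>
        have hLfind : L.find? (fun p => !x p.1) = some p := by rw [hfl, hfind]
        have hpL : p ∈ L := List.mem_of_find?_eq_some hLfind
        have hpz : p.2.zeroDepth ≤ d := hzd p hpL
        rw [hmap, hLfind]
        simp only [Option.map_some, hF]
        rw [dif_pos hpz]
        exact ((ih p.2 hpz).choose_spec.1 x)
    · have hd := searchAux_depth c ∅ LA (.leaf (onesLeaf T)) (d * c)
        (by simp [ADTree.depth])
        (by
          intro q hq
          simp only [hLA, List.mem_map] at hq
          obtain ⟨p, hp, rfl⟩ := hq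
          have hpz : p.2.zeroDepth ≤ d := hzd p hp
          simp only [hF]
          rw [dif_pos hpz]
          exact (ih p.2 hpz).choose_spec.2)
      calc (searchAux c ∅ LA (ADTree.leaf (onesLeaf T))).depth ≤ c + d * c := hd
        _ ≤ (d + 1) * c := by rw [Nat.add_mul]; omega

/-- A full decision tree computing any function, querying the variables in `l`. -/
def allTree {I : Type*} [DecidableEq I] (f : (I → Bool) → Bool) :
    List I → (I → Bool) → DTree I
  | [], x => .leaf (f x)
  | i :: l, x =>
    .node i (allTree f l (Function.update x i false)) (allTree f l (Function.update x i true))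

lemma allTree_eval {I : Type*} [DecidableEq I] (f : (I → Bool) → Bool) :
    ∀ (l : List I) (x0 y : I → Bool),
      (allTree f l x0).eval y = f (fun i => if i ∈ l then y i else x0 i) := by
  intro l
  induction l with
  | nil => intro x0 y; simp [allTree, DTree.eval]
  | cons i l ih =>
    intro x0 y
    have key : ∀ b : Bool, y i = b →
        f (fun j => if j ∈ l then y j else Function.update x0 i b j)
        = f (fun j => if j ∈ i :: l then y j else x0 j) := by
      intro b hb
      congr 1
      funext j
      by_cases hjl : j ∈ l
      · simp [hjl]
      · by_cases hji : j = i
        · subst hji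
          simp [hjl, Function.update_self, hb]
        · simp [hjl, hji, Function.update_of_ne hji]
    cases hy : y i with
    | false =>
      rw [show (allTree f (i :: l) x0).eval y
          = (allTree f l (Function.update x0 i false)).eval y from by
        simp [allTree, DTree.eval, hy]]
      rw [ih]
      exact key false hy
    | true =>
      rw [show (allTree f (i :: l) x0).eval y
          = (allTree f l (Function.update x0 i true)).eval y from by
        simp [allTree, DTree.eval, hy]]
      rw [ih]
      exact key true hy

lemma exists_dtree {I : Type*} [Fintype I] [DecidableEq I] (f : (I → Bool) → Bool) :
    ∃ T : DTree I, ∀ x, T.eval x = f x := by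
  refine ⟨allTree f Finset.univ.toList (fun _ => false), fun y => ?_⟩
  rw [allTree_eval]
  congr 1
  funext i
  simp [Finset.mem_toList]

end Aux

/-- for every Boolean function on `n` variables, the AND-query complexity is at
most the 0-query complexity times `log₂(n+1)`. -/
theorem stmt16 (n : ℕ) (f : (Fin n → Bool) → Bool) :
    andQuery f ≤ zeroQuery f * Nat.clog 2 (n + 1) := by
  classical
  have hmem : zeroQuery f ∈ {d | ∃ T : DTree (Fin n), (∀ x, T.eval x = f x) ∧ T.zeroDepth = d} := by
    apply Nat.sInf_mem
    obtain ⟨T, hT⟩ := exists_dtree f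
    exact ⟨T.zeroDepth, T, hT, rfl⟩
  obtain ⟨T, hT, hTd⟩ := hmem
  have hc : Fintype.card (Fin n) + 1 ≤ 2 ^ Nat.clog 2 (n + 1) := by
    rw [Fintype.card_fin]
    exact Nat.le_pow_clog one_lt_two _
  obtain ⟨A, hA, hAd⟩ := main_sim (Nat.clog 2 (n + 1)) hc (zeroQuery f) T (le_of_eq hTd)
  calc andQuery f ≤ A.depth := Nat.sInf_le ⟨A, fun x => (hA x).trans (hT x), rfl⟩
    _ ≤ _ := hAd
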